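/- Let q ≥ 3 be an integer, θ = 1 − 1/q, and define G(y) = √(y/(1−θ))·ln(y/θ) + √((1−y)/θ)·ln((1−y)/(1−θ)) for y ∈ (0,θ). Then sign(G(y)) = sign(1/q − y) for all y ∈ (0,θ): G(y) > 0 for 0 < y < 1/q, G(1/q) = 0, and G(y) < 0 for 1/q < y < θ. -/

import Mathlib

open Filter Real Set

section GfunAux

private lemma gaux1 {t : ℝ} (ht : 0 < t) : Real.sinh t < t * Real.cosh t := by
  have key : StrictMonoOn (fun t : ℝ => t * Real.cosh t - Real.sinh t) (Set.Ici 0) := by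
    apply strictMonoOn_of_deriv_pos (convex_Ici 0)
    · fun_prop
    · intro x hx
      rw [interior_Ici, Set.mem_Ioi] at hx
      have h1 : HasDerivAt (fun t : ℝ => t * Real.cosh t - Real.sinh t)
          (1 * Real.cosh x + x * Real.sinh x - Real.cosh x) x :=
        ((hasDerivAt_id x).mul (Real.hasDerivAt_cosh x)).sub (Real.hasDerivAt_sinh x)
      rw [h1.deriv]
      have := Real.sinh_pos_iff.mpr hx
      nlinarith
  have h0 := key (Set.self_mem_Ici) (Set.mem_Ici.mpr ht.le) ht
  simp at h0
  linarith

private lemma gaux2 {r s : ℝ} (hr : 0 < r) (hrs : r < s) :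
    s * Real.sinh r < r * Real.sinh s := by
  have key : StrictMonoOn (fun t : ℝ => Real.sinh t / t) (Set.Ioi 0) := by
    apply strictMonoOn_of_deriv_pos (convex_Ioi 0)
    · apply ContinuousOn.div (by fun_prop) (by fun_prop)
      intro x hx; exact ne_of_gt hx
    · intro x hx
      rw [interior_Ioi, Set.mem_Ioi] at hx
      have h1 : HasDerivAt (fun t : ℝ => Real.sinh t / t)
          ((Real.cosh x * x - Real.sinh x * 1) / (x ^ 2)) x :=
        (Real.hasDerivAt_sinh x).div (hasDerivAt_id x) (ne_of_gt hx)
      rw [h1.deriv]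
      have h2 := gaux1 hx
      apply div_pos (by nlinarith) (by positivity)
  have hs : (0:ℝ) < s := lt_trans hr hrs
  have h3 := key (Set.mem_Ioi.mpr hr) (Set.mem_Ioi.mpr hs) hrs
  simp only at h3
  rw [div_lt_div_iff₀ hr hs] at h3
  linarith

private lemma gsqrt_eq_exp {x : ℝ} (hx : 0 < x) :
    Real.sqrt x = Real.exp (Real.log x / 2) := by
  rw [Real.sqrt_eq_rpow, Real.rpow_def_of_pos hx]
  ring_nf

/-- Core inequality: `t ↦ √t·log t/(t-1)` is strictly decreasing on `(1,∞)`. -/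
private lemma gcore {x z : ℝ} (hx : 1 < x) (hz : x < z) :
    (x - 1) * (Real.sqrt z * Real.log z) < (z - 1) * (Real.sqrt x * Real.log x) := by
  have hx0 : (0:ℝ) < x := by linarith
  have hz0 : (0:ℝ) < z := by linarith
  set r := Real.log x / 2 with hrdef
  set s := Real.log z / 2 with hsdef
  have hr : 0 < r := by
    have := Real.log_pos hx; simp [hrdef]; linarith
  have hrs : r < s := by
    have := Real.log_lt_log hx0 hz; simp [hrdef, hsdef]; linarith
  have hxe : x = Real.exp r * Real.exp r := by
    rw [← Real.exp_add, ← Real.exp_log hx0]; congr 1; rw [hrdef]; ring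
  have hze : z = Real.exp s * Real.exp s := by
    rw [← Real.exp_add, ← Real.exp_log hz0]; congr 1; rw [hsdef]; ring
  have hlx : Real.log x = 2 * r := by rw [hrdef]; ring
  have hlz : Real.log z = 2 * s := by rw [hsdef]; ring
  have hsx : Real.sqrt x = Real.exp r := gsqrt_eq_exp hx0
  have hsz : Real.sqrt z = Real.exp s := gsqrt_eq_exp hz0
  have hx1 : x - 1 = 2 * Real.exp r * Real.sinh r := by
    rw [Real.sinh_eq, hxe]
    have : Real.exp r * Real.exp (-r) = 1 := by rw [← Real.exp_add]; simp
    nlinarith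
  have hz1 : z - 1 = 2 * Real.exp s * Real.sinh s := by
    rw [Real.sinh_eq, hze]
    have : Real.exp s * Real.exp (-s) = 1 := by rw [← Real.exp_add]; simp
    nlinarith
  rw [hx1, hz1, hlx, hlz, hsx, hsz]
  have key := gaux2 hr hrs
  have hp : 0 < Real.exp r * Real.exp s := by positivity
  nlinarith [mul_lt_mul_of_pos_left key hp]

private lemma gabs_identity {x v c : ℝ} (hx0 : 0 < x) (hv0 : 0 < v) (hc : 0 < c)
    (hx1 : x - 1 ≠ 0) (hid : c * (x - 1) = x * (v - 1)) :
    (Real.sqrt (c/x) * Real.log x⁻¹ + Real.sqrt (v/c) * Real.log v)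
      * (Real.sqrt c * Real.sqrt x * (x-1))
      = Real.sqrt x * ((x-1)*(Real.sqrt v * Real.log v)
          - (v-1)*(Real.sqrt x * Real.log x)) := by
  have hsx : Real.sqrt x * Real.sqrt x = x := Real.mul_self_sqrt hx0.le
  have hsc : Real.sqrt c * Real.sqrt c = c := Real.mul_self_sqrt hc.le
  have hsxp : 0 < Real.sqrt x := Real.sqrt_pos.mpr hx0
  have hscp : 0 < Real.sqrt c := Real.sqrt_pos.mpr hc
  rw [Real.sqrt_div hc.le, Real.sqrt_div hv0.le, Real.log_inv]
  field_simp
  linear_combination (Real.sqrt c*Real.sqrt x*Real.log x*(1-x))*hsc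
    - (Real.sqrt c*Real.sqrt x*Real.log x*(1-v))*hsx
    - (Real.sqrt c*Real.sqrt x*Real.log x)*hid
    + (Real.sqrt c*Real.log x*Real.sqrt x*(1-v) + Real.log x*(v-1))*hsx
    + (Real.log x*(1-x) + Real.sqrt c*Real.log x*Real.sqrt x*(x-1))*hsc
    + (Real.sqrt c*Real.sqrt x*Real.log x - Real.log x)*hid

private lemma gabs_neg {x v c : ℝ} (hx : 1 < x) (hxv : x < v) (hc : 0 < c)
    (hid : c * (x - 1) = x * (v - 1)) :
    Real.sqrt (c/x) * Real.log x⁻¹ + Real.sqrt (v/c) * Real.log v < 0 := by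
  have hx0 : (0:ℝ) < x := by linarith
  have hv0 : (0:ℝ) < v := by linarith
  have hsxp : 0 < Real.sqrt x := Real.sqrt_pos.mpr hx0
  have hscp : 0 < Real.sqrt c := Real.sqrt_pos.mpr hc
  have key := gcore hx hxv
  have hE := gabs_identity hx0 hv0 hc (by intro h; nlinarith [sub_eq_zero.mp h]) hid
  have hP : 0 < Real.sqrt c * Real.sqrt x * (x-1) := by
    have : 0 < x - 1 := by linarith
    positivity
  have hneg : (Real.sqrt (c/x) * Real.log x⁻¹ + Real.sqrt (v/c) * Real.log v)
      * (Real.sqrt c * Real.sqrt x * (x-1)) < 0 := by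
    rw [hE]
    apply mul_neg_of_pos_of_neg hsxp
    linarith
  by_contra h
  push_neg at h
  nlinarith

private lemma gabs_pos {x v c : ℝ} (hx : 1 < x) (hv : 1 < v) (hvx : v < x) (hc : 0 < c)
    (hid : c * (x - 1) = x * (v - 1)) :
    0 < Real.sqrt (c/x) * Real.log x⁻¹ + Real.sqrt (v/c) * Real.log v := by
  have hx0 : (0:ℝ) < x := by linarith
  have hv0 : (0:ℝ) < v := by linarith
  have hsxp : 0 < Real.sqrt x := Real.sqrt_pos.mpr hx0
  have hscp : 0 < Real.sqrt c := Real.sqrt_pos.mpr hc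
  have key := gcore hv hvx
  have hE := gabs_identity hx0 hv0 hc (by intro h; nlinarith [sub_eq_zero.mp h]) hid
  have hP : 0 < Real.sqrt c * Real.sqrt x * (x-1) := by
    have : 0 < x - 1 := by linarith
    positivity
  have hpos : 0 < (Real.sqrt (c/x) * Real.log x⁻¹ + Real.sqrt (v/c) * Real.log v)
      * (Real.sqrt c * Real.sqrt x * (x-1)) := by
    rw [hE]
    apply mul_pos hsxp
    linarith
  by_contra h
  push_neg at h
  nlinarith

end GfunAux

/-- The function `G(y) = √(y/(1-θ))·ln(y/θ) + √((1-y)/θ)·ln((1-y)/(1-θ))`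
with `θ = 1 - 1/q`. -/
noncomputable def Gfun (q : ℕ) (y : ℝ) : ℝ :=
  Real.sqrt (y / (1 - (1 - 1 / (q : ℝ)))) * Real.log (y / (1 - 1 / (q : ℝ))) +
    Real.sqrt ((1 - y) / (1 - 1 / (q : ℝ))) *
      Real.log ((1 - y) / (1 - (1 - 1 / (q : ℝ))))

private lemma Geq (q : ℕ) (hq : 3 ≤ q) {y : ℝ} (hy0 : 0 < y) (hy2 : y < 1 - 1/(q:ℝ)) :
    Gfun q y = Real.sqrt (((q:ℝ)-1)/((1-1/(q:ℝ))/y)) * Real.log ((1-1/(q:ℝ))/y)⁻¹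
      + Real.sqrt (((q:ℝ)*(1-y))/((q:ℝ)-1)) * Real.log ((q:ℝ)*(1-y)) := by
  have hq3 : (3:ℝ) ≤ (q:ℝ) := by exact_mod_cast hq
  have hqne : (q:ℝ) ≠ 0 := by positivity
  have hyne : y ≠ 0 := ne_of_gt hy0
  have hθ : (0:ℝ) < 1 - 1/(q:ℝ) := by
    have : 1/(q:ℝ) ≤ 1/3 := by
      apply div_le_div_of_nonneg_left (by norm_num) (by norm_num) hq3
    linarith
  have hθne : (1 - 1/(q:ℝ)) ≠ 0 := ne_of_gt hθ
  have hcne : (q:ℝ) - 1 ≠ 0 := by intro h; nlinarith [sub_eq_zero.mp h]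
  have e1 : y / (1 - (1 - 1/(q:ℝ))) = ((q:ℝ)-1)/((1-1/(q:ℝ))/y) := by
    field_simp
    ring
  have e2 : y/(1-1/(q:ℝ)) = ((1-1/(q:ℝ))/y)⁻¹ := by rw [inv_div]
  have e3 : (1-y)/(1-1/(q:ℝ)) = ((q:ℝ)*(1-y))/((q:ℝ)-1) := by
    field_simp
  have e4 : (1-y)/(1 - (1 - 1/(q:ℝ))) = (q:ℝ)*(1-y) := by
    field_simp
    ring
  rw [Gfun, e1, e2, e3, e4]

theorem stmt18 (q : ℕ) (hq : 3 ≤ q) :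
    (∀ y ∈ Set.Ioo (0 : ℝ) (1 - 1 / (q : ℝ)),
      Real.sign (Gfun q y) = Real.sign (1 / (q : ℝ) - y)) ∧
    (∀ y : ℝ, 0 < y → y < 1 / (q : ℝ) → 0 < Gfun q y) ∧
    Gfun q (1 / (q : ℝ)) = 0 ∧
    (∀ y : ℝ, 1 / (q : ℝ) < y → y < 1 - 1 / (q : ℝ) → Gfun q y < 0) := by
  have hq3 : (3:ℝ) ≤ (q:ℝ) := by exact_mod_cast hq
  have hq0 : (0:ℝ) < (q:ℝ) := by linarith
  have hqne : (q:ℝ) ≠ 0 := ne_of_gt hq0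
  have hθ : (0:ℝ) < 1 - 1/(q:ℝ) := by
    have : 1/(q:ℝ) ≤ 1/3 := by
      apply div_le_div_of_nonneg_left (by norm_num) (by norm_num) hq3
    linarith
  have hθne : (1 - 1/(q:ℝ)) ≠ 0 := ne_of_gt hθ
  have hc : (0:ℝ) < (q:ℝ) - 1 := by linarith
  have hcne : (q:ℝ) - 1 ≠ 0 := ne_of_gt hc
  have hinvq : (0:ℝ) < 1/(q:ℝ) := by positivity
  have hinvq3 : 1/(q:ℝ) ≤ 1/3 := by
    apply div_le_div_of_nonneg_left (by norm_num) (by norm_num) hq3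
  -- positive part
  have Gpos : ∀ y : ℝ, 0 < y → y < 1 / (q : ℝ) → 0 < Gfun q y := by
    intro y hy0 hy1
    have hyne : y ≠ 0 := ne_of_gt hy0
    have hy2 : y < 1 - 1/(q:ℝ) := by linarith
    have hqy : (q:ℝ) * y < 1 := by
      have h := mul_lt_mul_of_pos_left hy1 hq0
      rwa [mul_one_div, div_self hqne] at h
    rw [Geq q hq hy0 hy2]
    apply gabs_pos
    · exact (one_lt_div hy0).mpr hy2
    · nlinarith
    · rw [lt_div_iff₀ hy0]
      have hA : (0:ℝ) < 1 - (q:ℝ)*y := by linarith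
      have hB : (0:ℝ) < (q:ℝ)-1-(q:ℝ)*y := by nlinarith
      have h9 : (q:ℝ)*(1-1/(q:ℝ)) = (q:ℝ)-1 := by field_simp
      have hkey : (q:ℝ)*((q:ℝ)*(1-y)*y) < (q:ℝ)*(1-1/(q:ℝ)) := by
        rw [h9]; nlinarith [mul_pos hA hB]
      exact (mul_lt_mul_iff_right₀ hq0).mp hkey
    · exact hc
    · field_simp
      all_goals first | (left; ring) | ring
  -- negative part
  have Gneg : ∀ y : ℝ, 1 / (q : ℝ) < y → y < 1 - 1 / (q : ℝ) → Gfun q y < 0 := by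
    intro y hy1 hy2
    have hy0 : 0 < y := lt_trans hinvq hy1
    have hyne : y ≠ 0 := ne_of_gt hy0
    have hqy : 1 < (q:ℝ) * y := by
      have h := mul_lt_mul_of_pos_left hy1 hq0
      rwa [mul_one_div, div_self hqne] at h
    have hqy2 : (q:ℝ) * y < (q:ℝ) - 1 := by
      have h := mul_lt_mul_of_pos_left hy2 hq0
      calc (q:ℝ) * y < (q:ℝ) * (1 - 1/(q:ℝ)) := h
        _ = (q:ℝ) - 1 := by field_simp
    rw [Geq q hq hy0 hy2]
    apply gabs_neg
    · exact (one_lt_div hy0).mpr hy2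
    · rw [div_lt_iff₀ hy0]
      have hA : (0:ℝ) < (q:ℝ)*y - 1 := by linarith
      have hB : (0:ℝ) < (q:ℝ)-1-(q:ℝ)*y := by linarith
      have h9 : (q:ℝ)*(1-1/(q:ℝ)) = (q:ℝ)-1 := by field_simp
      have hkey : (q:ℝ)*(1-1/(q:ℝ)) < (q:ℝ)*((q:ℝ)*(1-y)*y) := by
        rw [h9]; nlinarith [mul_pos hA hB]
      exact (mul_lt_mul_iff_right₀ hq0).mp hkey
    · exact hc
    · field_simp
      all_goals first | (left; ring) | ring
  -- zero part
  have Gzero : Gfun q (1 / (q : ℝ)) = 0 := by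
    rw [Gfun]
    have e : (1:ℝ) - (1 - 1/(q:ℝ)) = 1/(q:ℝ) := by ring
    rw [e, div_self (ne_of_gt hinvq), div_self hθne, Real.sqrt_one, one_mul, one_mul]
    have hlog : Real.log ((1 - 1/(q:ℝ))/(1/(q:ℝ)))
        = - Real.log ((1/(q:ℝ))/(1 - 1/(q:ℝ))) := by
      rw [← Real.log_inv, inv_div]
    rw [hlog]
    ring
  refine ⟨?_, Gpos, Gzero, Gneg⟩
  intro y hy
  obtain ⟨hy0, hy2⟩ := hy
  rcases lt_trichotomy y (1/(q:ℝ)) with h | h | h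
  · rw [Real.sign_of_pos (Gpos y hy0 h), Real.sign_of_pos (by linarith : (0:ℝ) < 1/(q:ℝ) - y)]
  · rw [h, Gzero, sub_self, Real.sign_zero]
  · rw [Real.sign_of_neg (Gneg y h hy2), Real.sign_of_neg (by linarith : 1/(q:ℝ) - y < 0)]
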